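/- arXiv:1611.06501 — 7 statements merged into one kernel-verified Lean document; each statement's English description precedes it below -/
import Mathlib

section
/- Let δ ∈ (0,1) and M > 0, let R be a finite family of weighted open axis-parallel squares each of side length at least M, let Q ⊆ R be a subfamily, let φ : R → Q be a (δM/2)-close mapping, and let S ⊆ R be an independent subfamily. Then φ is injective on S, the δ-shrinkings of the squares of φ(S) are pairwise disjoint, and the total weight of φ(S) is at least the total weight of S. Consequently, OPT_k(Q^{−δ}) ≥ OPT_k(R) for every non-negative integer k. -/
open scoped Classical

/-- The open axis-parallel square with center `c` and side length `g`, as a subset of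
the plane `ℝ × ℝ` equipped with the supremum norm (which is the product metric). -/
def sqSet (c : ℝ × ℝ) (g : ℝ) : Set (ℝ × ℝ) := {p | dist p c < g / 2}

/-- The maximum total weight of a subfamily of `A` of size at most `k` whose associated
sets (`sets i` for `i` in the subfamily) are pairwise disjoint. -/
noncomputable def optFam {ι : Type*} (A : Finset ι) (sets : ι → Set (ℝ × ℝ))
    (w : ι → ℝ) (k : ℕ) : ℝ :=
  (A.powerset.filter
      (fun T => T.card ≤ k ∧ ∀ i ∈ T, ∀ j ∈ T, i ≠ j → Disjoint (sets i) (sets j))).sup'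
    ⟨∅, by simp⟩ (fun T => ∑ i ∈ T, w i)

set_option maxHeartbeats 1000000

lemma sqSet_eq_ball (c : ℝ × ℝ) (g : ℝ) : sqSet c g = Metric.ball c (g / 2) := rfl

lemma sqSet_disjoint_iff (c₁ c₂ : ℝ × ℝ) {g₁ g₂ : ℝ} (h₁ : 0 < g₁) (h₂ : 0 < g₂) :
    Disjoint (sqSet c₁ g₁) (sqSet c₂ g₂) ↔ g₁ / 2 + g₂ / 2 ≤ dist c₁ c₂ := by
  rw [sqSet_eq_ball, sqSet_eq_ball]
  exact disjoint_ball_ball_iff (by linarith) (by linarith)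

/-- Let `R` be a family of weighted squares of side length at least `M`,
`Q ⊆ R`, `φ : R → Q` a `(δM/2)`-close mapping, and `S ⊆ R` an independent subfamily.
Then `φ` is injective on `S`, the `δ`-shrinkings of the squares of `φ(S)` are pairwise
disjoint, the weight of `φ(S)` is at least that of `S`, and consequently
`OPT_k(Q^{-δ}) ≥ OPT_k(R)` for every `k`. -/
theorem close_mapping_preserves_independence_and_opt
    {ι : Type*} [DecidableEq ι] (δ M : ℝ) (hδ0 : 0 < δ) (hδ1 : δ < 1) (hM : 0 < M)
    (R Q : Finset ι) (hQR : Q ⊆ R)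
    (center : ι → ℝ × ℝ) (side : ι → ℝ) (weight : ι → ℝ)
    (hside : ∀ i ∈ R, M ≤ side i) (hw : ∀ i ∈ R, 0 ≤ weight i)
    (φ : ι → ι) (hφQ : ∀ i ∈ R, φ i ∈ Q)
    (hclose : ∀ i ∈ R, side (φ i) ≤ side i ∧ weight i ≤ weight (φ i) ∧
      dist (center i) (center (φ i)) ≤ δ * M / 2)
    (S : Finset ι) (hSR : S ⊆ R)
    (hind : ∀ i ∈ S, ∀ j ∈ S, i ≠ j →
      Disjoint (sqSet (center i) (side i)) (sqSet (center j) (side j))) :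
    Set.InjOn φ ↑S ∧
    (∀ i ∈ S, ∀ j ∈ S, i ≠ j →
      Disjoint (sqSet (center (φ i)) ((1 - δ) * side (φ i)))
               (sqSet (center (φ j)) ((1 - δ) * side (φ j)))) ∧
    (∑ i ∈ S, weight i) ≤ (∑ j ∈ S.image φ, weight j) ∧
    (∀ k : ℕ,
      optFam R (fun i => sqSet (center i) (side i)) weight k ≤
      optFam Q (fun i => sqSet (center i) ((1 - δ) * side i)) weight k) := by
  -- A general claim for any independent subfamily T ⊆ R.
  have main : ∀ T : Finset ι, T ⊆ R →
      (∀ i ∈ T, ∀ j ∈ T, i ≠ j →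
        Disjoint (sqSet (center i) (side i)) (sqSet (center j) (side j))) →
      Set.InjOn φ ↑T ∧
      (∀ i ∈ T, ∀ j ∈ T, i ≠ j →
        Disjoint (sqSet (center (φ i)) ((1 - δ) * side (φ i)))
                 (sqSet (center (φ j)) ((1 - δ) * side (φ j)))) ∧
      (∑ i ∈ T, weight i) ≤ (∑ j ∈ T.image φ, weight j) := by
    intro T hTR hTind
    have hsidepos : ∀ i ∈ R, 0 < side i := fun i hi => lt_of_lt_of_le hM (hside i hi)
    have hsφ : ∀ i ∈ R, M ≤ side (φ i) := fun i hi =>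
      hside (φ i) (hQR (hφQ i hi))
    -- distance lower bound from independence
    have hdist : ∀ i ∈ T, ∀ j ∈ T, i ≠ j →
        side i / 2 + side j / 2 ≤ dist (center i) (center j) := by
      intro i hi j hj hij
      exact (sqSet_disjoint_iff _ _ (hsidepos i (hTR hi)) (hsidepos j (hTR hj))).mp
        (hTind i hi j hj hij)
    have hinj : Set.InjOn φ ↑T := by
      intro i hi j hj hEq
      by_contra hij
      have hi' := hTR hi
      have hj' := hTR hj
      have h1 := (hclose i hi').2.2
      have h2 := (hclose j hj').2.2
      have hd : dist (center i) (center j) ≤ δ * M := by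
        calc dist (center i) (center j)
            ≤ dist (center i) (center (φ i)) + dist (center (φ i)) (center j) :=
              dist_triangle _ _ _
          _ ≤ δ * M / 2 + δ * M / 2 :=
              add_le_add h1 (by rw [hEq, dist_comm]; exact h2)
          _ = δ * M := by ring
      have hMi := hside i hi'
      have hMj := hside j hj'
      have hδM : δ * M < M := mul_lt_of_lt_one_left hM hδ1
      have := hdist i hi j hj hij
      linarith
    refine ⟨hinj, ?_, ?_⟩
    · intro i hi j hj hij
      have hi' := hTR hi
      have hj' := hTR hj
      have hφij : φ i ≠ φ j := fun h => hij (hinj hi hj h)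
      rw [sqSet_disjoint_iff _ _
        (mul_pos (by linarith) (hsidepos (φ i) (hQR (hφQ i hi'))))
        (mul_pos (by linarith) (hsidepos (φ j) (hQR (hφQ j hj'))))]
      have h1 := (hclose i hi').2.2
      have h2 := (hclose j hj').2.2
      have hd := hdist i hi j hj hij
      have ht : dist (center i) (center j) ≤
          dist (center i) (center (φ i)) + dist (center (φ i)) (center (φ j)) +
          dist (center (φ j)) (center j) := dist_triangle4 _ _ _ _
      have hsi := (hclose i hi').1
      have hsj := (hclose j hj').1
      have hMi := hside i hi'
      have hMj := hside j hj'
      have h2' : dist (center (φ j)) (center j) ≤ δ * M / 2 := by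
        rw [dist_comm]; exact h2
      have p1 : 0 ≤ δ * (side (φ i) - M) :=
        mul_nonneg hδ0.le (by linarith [hsφ i hi'])
      have p2 : 0 ≤ δ * (side (φ j) - M) :=
        mul_nonneg hδ0.le (by linarith [hsφ j hj'])
      nlinarith [p1, p2]
    · rw [Finset.sum_image (fun i hi j hj h => hinj hi hj h)]
      exact Finset.sum_le_sum fun i hi => (hclose i (hTR hi)).2.1
  obtain ⟨hinj, hdisj, hwt⟩ := main S hSR hind
  refine ⟨hinj, hdisj, hwt, ?_⟩
  intro k
  unfold optFam
  apply Finset.sup'_le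
  intro T hT
  simp only [Finset.mem_filter, Finset.mem_powerset] at hT
  obtain ⟨hTR, hTk, hTind⟩ := hT
  obtain ⟨hinjT, hdisjT, hwtT⟩ := main T hTR hTind
  refine le_trans hwtT (Finset.le_sup' (fun T => ∑ i ∈ T, weight i) ?_)
  simp only [Finset.mem_filter, Finset.mem_powerset]
  refine ⟨?_, le_trans Finset.card_image_le hTk, ?_⟩
  · intro x hx
    obtain ⟨a, ha, rfl⟩ := Finset.mem_image.mp hx
    exact hφQ a (hTR ha)
  · intro i hi j hj hij
    obtain ⟨a, ha, rfl⟩ := Finset.mem_image.mp hi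
    obtain ⟨b, hb, rfl⟩ := Finset.mem_image.mp hj
    exact hdisjT a ha b hb (fun h => hij (by rw [h]))
end

section
/- Let δ ∈ (0,1) and let R be a finite family of open axis-parallel unit squares, each carrying a non-negative real weight. Then there exists a subfamily Q ⊆ R that is (δ/2)-distant, together with a mapping φ : R → Q such that for every R_i ∈ R, the weight of φ(R_i) is at least the weight of R_i and the centers of R_i and φ(R_i) are at ℓ∞-distance at most δ/2. -/
open Classical in
private lemma greedy_aux {ι : Type*} (δ : ℝ) (hδ : 0 ≤ δ) (center : ι → ℝ × ℝ) (weight : ι → ℝ) :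
    ∀ n (R : Finset ι), R.card = n →
    ∃ Q : Finset ι, Q ⊆ R ∧
      (∀ i ∈ Q, ∀ j ∈ Q, i ≠ j → δ / 2 ≤ dist (center i) (center j)) ∧
      ∃ φ : ι → ι, (∀ i ∈ R, φ i ∈ Q) ∧
        ∀ i ∈ R, weight i ≤ weight (φ i) ∧ dist (center i) (center (φ i)) ≤ δ / 2 := by
  intro n
  induction n using Nat.strong_induction_on with
  | _ n ih =>
    intro R hcard
    rcases R.eq_empty_or_nonempty with rfl | hne
    · exact ⟨∅, Finset.Subset.refl _, by simp, id, by simp, by simp⟩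
    · obtain ⟨i, hiR, himax⟩ := R.exists_max_image weight hne
      set S : Finset ι := R.filter (fun j => dist (center j) (center i) ≤ δ / 2) with hS
      have hiS : i ∈ S := by
        simp [hS, hiR, dist_self]
        linarith
      have hcard' : (R \ S).card < n := by
        have : (R \ S).card < R.card :=
          Finset.card_lt_card (Finset.sdiff_ssubset (by simp [hS, Finset.filter_subset])
            ⟨i, hiS⟩)
        omega
      obtain ⟨Q', hQ'sub, hQ'dist, φ', hφ'mem, hφ'prop⟩ :=
        ih _ hcard' (R \ S) rfl
      refine ⟨insert i Q', ?_, ?_, fun j => if j ∈ S then i else φ' j, ?_, ?_⟩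
      · intro x hx
        rcases Finset.mem_insert.mp hx with rfl | hx
        · exact hiR
        · exact (Finset.sdiff_subset (hQ'sub hx))
      · have key : ∀ q ∈ Q', δ / 2 ≤ dist (center i) (center q) := by
          intro q hq
          have hqS : q ∉ S := (Finset.mem_sdiff.mp (hQ'sub hq)).2
          have hqR : q ∈ R := (Finset.mem_sdiff.mp (hQ'sub hq)).1
          have : ¬ dist (center q) (center i) ≤ δ / 2 := by
            intro h; exact hqS (Finset.mem_filter.mpr ⟨hqR, h⟩)
          rw [dist_comm]; linarith [not_le.mp this]
        intro x hx y hy hxy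
        rcases Finset.mem_insert.mp hx with rfl | hx
        · rcases Finset.mem_insert.mp hy with rfl | hy
          · exact absurd rfl hxy
          · exact key y hy
        · rcases Finset.mem_insert.mp hy with hyi | hy
          · rw [hyi, dist_comm]; exact key x hx
          · exact hQ'dist x hx y hy hxy
      · intro j hjR
        by_cases hjS : j ∈ S
        · simp [hjS]
        · simp only [hjS, if_false]
          exact Finset.mem_insert_of_mem (hφ'mem j (Finset.mem_sdiff.mpr ⟨hjR, hjS⟩))
      · intro j hjR
        by_cases hjS : j ∈ S
        · simp only [hjS, if_true]
          exact ⟨himax j hjR, (Finset.mem_filter.mp hjS).2⟩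
        · simp only [hjS, if_false]
          exact hφ'prop j (Finset.mem_sdiff.mpr ⟨hjR, hjS⟩)

/-- For a finite family `R` of weighted open axis-parallel unit squares
(described by their centers `center i` and nonnegative weights `weight i`), there is a
`(δ/2)`-distant subfamily `Q ⊆ R` and a mapping `φ : R → Q` such that every square of
`R` is mapped to a square of at least the same weight whose center is at `ℓ∞`-distance
at most `δ/2`. -/
theorem exists_distant_subfamily_unit_squares
    {ι : Type*} (δ : ℝ) (hδ0 : 0 < δ) (hδ1 : δ < 1)
    (R : Finset ι) (center : ι → ℝ × ℝ) (weight : ι → ℝ)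
    (hw : ∀ i ∈ R, 0 ≤ weight i) :
    ∃ Q : Finset ι, Q ⊆ R ∧
      (∀ i ∈ Q, ∀ j ∈ Q, i ≠ j → δ / 2 ≤ dist (center i) (center j)) ∧
      ∃ φ : ι → ι, (∀ i ∈ R, φ i ∈ Q) ∧
        ∀ i ∈ R, weight i ≤ weight (φ i) ∧ dist (center i) (center (φ i)) ≤ δ / 2 := by
  exact greedy_aux δ hδ0.le center weight R.card R rfl
end

section
/- Let δ ∈ (0,1) and M > 0, and let R be a finite family of open axis-parallel squares of uniform weight 1, each of side length at least M. Then there exists a subfamily Q ⊆ R that is (δM/2)-distant, together with a mapping φ : R → Q such that for every R_i ∈ R, the side length of φ(R_i) is at most the side length of R_i and the centers of R_i and φ(R_i) are at ℓ∞-distance at most δM/2. -/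
/-- Auxiliary greedy selection lemma, by strong induction on the finite family:
repeatedly pick the square of minimal side, map everything within distance `lam`
of it to it, and recurse on the rest. -/
theorem exists_distant_subfamily_aux {ι : Type*} (lam : ℝ) (hlam : 0 < lam)
    (center : ι → ℝ × ℝ) (side : ι → ℝ) (R : Finset ι) :
    ∃ Q : Finset ι, Q ⊆ R ∧
      (∀ i ∈ Q, ∀ j ∈ Q, i ≠ j → lam ≤ dist (center i) (center j)) ∧
      ∃ φ : ι → ι, (∀ i ∈ R, φ i ∈ Q) ∧
        ∀ i ∈ R, side (φ i) ≤ side i ∧ dist (center i) (center (φ i)) ≤ lam := by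
  classical
  induction R using Finset.strongInductionOn with
  | _ R ih =>
    rcases R.eq_empty_or_nonempty with rfl | hne
    · exact ⟨∅, Finset.Subset.refl _, by simp, id, by simp, by simp⟩
    obtain ⟨i₀, hi₀R, hmin⟩ := R.exists_min_image side hne
    set R' : Finset ι := R.filter (fun j => ¬ dist (center i₀) (center j) < lam) with hR'
    have hsub : R' ⊆ R := Finset.filter_subset _ _
    have hssub : R' ⊂ R := by
      refine (Finset.ssubset_iff_of_subset hsub).mpr ⟨i₀, hi₀R, ?_⟩
      simp [hR', hi₀R, dist_self, hlam]
    obtain ⟨Q', hQ'sub, hQ'dist, φ', hφ'Q, hφ'⟩ := ih R' hssub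
    refine ⟨insert i₀ Q', Finset.insert_subset hi₀R (hQ'sub.trans hsub), ?_, ?_⟩
    · intro i hi j hj hij
      rcases Finset.mem_insert.mp hi with rfl | hi
      · rcases Finset.mem_insert.mp hj with rfl | hj
        · exact absurd rfl hij
        · exact le_of_not_gt (Finset.mem_filter.mp (hQ'sub hj)).2
      · rcases Finset.mem_insert.mp hj with hj | hj
        · rw [hj, dist_comm]
          exact le_of_not_gt (Finset.mem_filter.mp (hQ'sub hi)).2
        · exact hQ'dist i hi j hj hij
    · refine ⟨fun i => if dist (center i₀) (center i) < lam then i₀ else φ' i, ?_, ?_⟩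
      · intro i hiR
        by_cases h : dist (center i₀) (center i) < lam
        · simp [h]
        · have hiR' : i ∈ R' := Finset.mem_filter.mpr ⟨hiR, h⟩
          simp only [h, if_false]
          exact Finset.mem_insert_of_mem (hφ'Q i hiR')
      · intro i hiR
        by_cases h : dist (center i₀) (center i) < lam
        · simp only [h, if_true]
          exact ⟨hmin i hiR, by rw [dist_comm]; exact h.le⟩
        · have hiR' : i ∈ R' := Finset.mem_filter.mpr ⟨hiR, h⟩
          simp only [h, if_false]
          exact hφ' i hiR'

/-- For a finite family `R` of open axis-parallel squares of uniform
weight 1 (described by centers and side lengths), each of side length at least `M`,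
there is a `(δM/2)`-distant subfamily `Q ⊆ R` and a mapping `φ : R → Q` such that every
square of `R` is mapped to a square of at most the same side length whose center is at
`ℓ∞`-distance at most `δM/2`. -/
theorem exists_distant_subfamily_squares
    {ι : Type*} (δ M : ℝ) (hδ0 : 0 < δ) (hδ1 : δ < 1) (hM : 0 < M)
    (R : Finset ι) (center : ι → ℝ × ℝ) (side : ι → ℝ)
    (hside : ∀ i ∈ R, M ≤ side i) :
    ∃ Q : Finset ι, Q ⊆ R ∧
      (∀ i ∈ Q, ∀ j ∈ Q, i ≠ j → δ * M / 2 ≤ dist (center i) (center j)) ∧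
      ∃ φ : ι → ι, (∀ i ∈ R, φ i ∈ Q) ∧
        ∀ i ∈ R, side (φ i) ≤ side i ∧ dist (center i) (center (φ i)) ≤ δ * M / 2 := by
  exact exists_distant_subfamily_aux (δ * M / 2) (by positivity) center side R
end

section
/- Let δ ∈ (0,1) and let R_i and R_j be two open axis-parallel squares with side lengths g_i ≤ g_j. Then at least one of the following holds: R_i is contained in R_j, or the δ-shrinkings of R_i and R_j are disjoint, or g_j/g_i < 2/δ. -/
/-- For δ ∈ (0,1) and two open axis-parallel squares with side lengths
`0 < gi ≤ gj`: either the first is contained in the second, or their δ-shrinkings are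
disjoint, or `gj / gi < 2/δ`. -/
theorem contained_or_shrink_disjoint_or_ratio_small
    (δ : ℝ) (hδ0 : 0 < δ) (hδ1 : δ < 1)
    (ci cj : ℝ × ℝ) (gi gj : ℝ) (hgi : 0 < gi) (hgij : gi ≤ gj) :
    sqSet ci gi ⊆ sqSet cj gj ∨
    Disjoint (sqSet ci ((1 - δ) * gi)) (sqSet cj ((1 - δ) * gj)) ∨
    gj / gi < 2 / δ := by
  by_cases hr : gj / gi < 2 / δ
  · exact Or.inr (Or.inr hr)
  by_cases hc : sqSet ci gi ⊆ sqSet cj gj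
  · exact Or.inl hc
  right; left
  -- from ¬ ratio small: 2 * gi ≤ δ * gj
  have hratio : 2 * gi ≤ δ * gj := by
    have h := le_of_not_gt hr
    rw [div_le_div_iff₀ hδ0 hgi] at h
    linarith
  -- from non-containment: a witness p
  obtain ⟨p, hp1, hp2⟩ := Set.not_subset.mp hc
  have hp1' : dist p ci < gi / 2 := hp1
  have hp2' : gj / 2 ≤ dist p cj := le_of_not_gt hp2
  have hcc : gj / 2 - gi / 2 < dist ci cj := by
    have := dist_triangle p ci cj
    have h2 := dist_comm p ci
    linarith [dist_triangle ci p cj, dist_comm ci p]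
  rw [Set.disjoint_left]
  intro q hq1 hq2
  have hq1' : dist q ci < (1 - δ) * gi / 2 := hq1
  have hq2' : dist q cj < (1 - δ) * gj / 2 := hq2
  have := dist_triangle ci q cj
  rw [dist_comm ci q] at this
  nlinarith [mul_pos hδ0 hgi]
end

section
/- Let δ ∈ (0,1) and let R_1, …, R_k be open axis-parallel squares with side lengths g_1 ≤ g_2 ≤ … ≤ g_k such that no square among them is contained in another, and such that g_j/g_i ≥ 2/δ for all 1 ≤ i < j ≤ k. Then the δ-shrinkings of R_1, …, R_k are pairwise disjoint. -/
lemma shrink_disjoint_aux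
    (δ : ℝ) (hδ0 : 0 < δ) (hδ1 : δ < 1) (k : ℕ)
    (c : Fin k → ℝ × ℝ) (g : Fin k → ℝ)
    (hg : ∀ i, 0 < g i)
    (hnotcont : ∀ i j : Fin k, i ≠ j → ¬ (sqSet (c i) (g i) ⊆ sqSet (c j) (g j)))
    (hratio : ∀ i j : Fin k, i < j → 2 / δ ≤ g j / g i)
    (i j : Fin k) (hij : i < j) :
    Disjoint (sqSet (c i) ((1 - δ) * g i)) (sqSet (c j) ((1 - δ) * g j)) := by
  obtain ⟨p, hpi, hpj⟩ := Set.not_subset.1 (hnotcont i j hij.ne)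
  simp only [sqSet, Set.mem_setOf_eq, not_lt] at hpi hpj
  have hcc : g j / 2 - g i / 2 < dist (c i) (c j) := by
    have := dist_triangle p (c i) (c j)
    linarith
  have hgi := hg i
  have hgj := hg j
  have hkey : 2 * g i ≤ δ * g j := by
    have := hratio i j hij
    rw [div_le_div_iff₀ hδ0 hgi] at this
    linarith
  rw [Set.disjoint_left]
  intro q hqi hqj
  simp only [sqSet, Set.mem_setOf_eq] at hqi hqj
  have := dist_triangle (c i) q (c j)
  have h1 : dist (c i) q = dist q (c i) := dist_comm _ _
  nlinarith [mul_pos hδ0 hgi]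

/-- Given squares `R_1, …, R_k` with side lengths `g 1 ≤ … ≤ g k`, no one
contained in another, such that `g j / g i ≥ 2/δ` whenever `i < j`, the δ-shrinkings
of the squares are pairwise disjoint. -/
theorem shrinkings_pairwise_disjoint_of_large_ratios
    (δ : ℝ) (hδ0 : 0 < δ) (hδ1 : δ < 1) (k : ℕ)
    (c : Fin k → ℝ × ℝ) (g : Fin k → ℝ)
    (hg : ∀ i, 0 < g i) (hmono : ∀ i j : Fin k, i ≤ j → g i ≤ g j)
    (hnotcont : ∀ i j : Fin k, i ≠ j → ¬ (sqSet (c i) (g i) ⊆ sqSet (c j) (g j)))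
    (hratio : ∀ i j : Fin k, i < j → 2 / δ ≤ g j / g i) :
    ∀ i j : Fin k, i ≠ j →
      Disjoint (sqSet (c i) ((1 - δ) * g i)) (sqSet (c j) ((1 - δ) * g j)) := by
  intro i j hij
  rcases lt_or_gt_of_ne hij with h | h
  · exact shrink_disjoint_aux δ hδ0 hδ1 k c g hg hnotcont hratio i j h
  · exact (shrink_disjoint_aux δ hδ0 hδ1 k c g hg hnotcont hratio j i h).symm
end

section
/- Let δ ∈ (0,1) and let Q be a finite family of open axis-parallel unit squares that is (δ/2)-distant. Then for every square R_i ∈ Q, the number of squares R_j ∈ Q whose δ-shrinking either intersects the δ-shrinking of R_i, or intersects the δ-shrinking of some square of Q whose δ-shrinking intersects the δ-shrinking of R_i, is at most 64/δ². -/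
open scoped Classical

lemma sq_inter_dist {c1 c2 : ℝ × ℝ} {g : ℝ}
    (h : (sqSet c1 g ∩ sqSet c2 g).Nonempty) : dist c1 c2 < g := by
  obtain ⟨p, hp1, hp2⟩ := h
  have h1 : dist p c1 < g / 2 := hp1
  have h2 : dist p c2 < g / 2 := hp2
  calc dist c1 c2 ≤ dist c1 p + dist p c2 := dist_triangle _ _ _
    _ < g / 2 + g / 2 := by rw [dist_comm c1 p]; linarith
    _ = g := by ring

lemma floor_card_bound {a b : ℝ} (h : a ≤ b) :
    ((Finset.Icc ⌊a⌋ ⌊b⌋).card : ℝ) ≤ b - a + 2 := by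
  rw [Int.card_Icc]
  have h1 : ((⌊b⌋ + 1 - ⌊a⌋ : ℤ).toNat : ℤ) = (⌊b⌋ + 1 - ⌊a⌋ : ℤ) := by
    rw [Int.toNat_of_nonneg]
    have := Int.floor_le_floor h
    omega
  have h2 : ((⌊b⌋ + 1 - ⌊a⌋ : ℤ) : ℝ) ≤ b - a + 2 := by
    push_cast
    have hb := Int.floor_le b
    have ha := Int.sub_one_lt_floor a
    linarith
  calc (((⌊b⌋ + 1 - ⌊a⌋ : ℤ).toNat : ℕ) : ℝ) = (((⌊b⌋ + 1 - ⌊a⌋ : ℤ) : ℝ)) := by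
        exact_mod_cast congrArg (Int.cast : ℤ → ℝ) h1
    _ ≤ b - a + 2 := h2

lemma floor_mem_Icc {δ t u : ℝ} (hδ0 : 0 < δ) (h : |u - t| < 2 * (1 - δ)) :
    ⌊2 * u / δ⌋ ∈ Finset.Icc ⌊2 * t / δ - (4 - 4 * δ) / δ⌋ ⌊2 * t / δ + (4 - 4 * δ) / δ⌋ := by
  rw [abs_lt] at h
  rw [Finset.mem_Icc]
  constructor
  · apply Int.floor_le_floor
    rw [div_sub_div_same, div_le_div_iff₀ hδ0 hδ0]
    nlinarith [h.1]
  · apply Int.floor_le_floor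
    rw [← add_div, div_le_div_iff₀ hδ0 hδ0]
    nlinarith [h.2]

/-- In a `(δ/2)`-distant finite family `Q` of open axis-parallel unit
squares, for every square of `Q` the number of squares of `Q` whose δ-shrinking
intersects its δ-shrinking, or intersects the δ-shrinking of some square of `Q` whose
δ-shrinking intersects its δ-shrinking, is at most `64/δ²`. -/
theorem distant_unit_squares_shrink_two_hop_bound
    {ι : Type*} (δ : ℝ) (hδ0 : 0 < δ) (hδ1 : δ < 1)
    (Q : Finset ι) (center : ι → ℝ × ℝ)
    (hdist : ∀ i ∈ Q, ∀ j ∈ Q, i ≠ j → δ / 2 ≤ dist (center i) (center j)) :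
    ∀ i ∈ Q,
      ((Q.filter (fun j =>
          (sqSet (center j) (1 - δ) ∩ sqSet (center i) (1 - δ)).Nonempty ∨
          ∃ l ∈ Q, (sqSet (center l) (1 - δ) ∩ sqSet (center i) (1 - δ)).Nonempty ∧
            (sqSet (center j) (1 - δ) ∩ sqSet (center l) (1 - δ)).Nonempty)).card : ℝ)
        ≤ 64 / δ ^ 2 := by
  intro i hi
  set S := Q.filter (fun j =>
      (sqSet (center j) (1 - δ) ∩ sqSet (center i) (1 - δ)).Nonempty ∨
      ∃ l ∈ Q, (sqSet (center l) (1 - δ) ∩ sqSet (center i) (1 - δ)).Nonempty ∧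
        (sqSet (center j) (1 - δ) ∩ sqSet (center l) (1 - δ)).Nonempty) with hS
  -- every member of S has center within 2(1-δ) of center i
  have hnear : ∀ j ∈ S, dist (center j) (center i) < 2 * (1 - δ) := by
    intro j hj
    rw [hS, Finset.mem_filter] at hj
    rcases hj.2 with h | ⟨l, _, h1, h2⟩
    · have := sq_inter_dist h; linarith
    · have d1 := sq_inter_dist h1
      have d2 := sq_inter_dist h2
      calc dist (center j) (center i)
          ≤ dist (center j) (center l) + dist (center l) (center i) := dist_triangle _ _ _
        _ < 2 * (1 - δ) := by linarith
  -- grid map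
  set f : ι → ℤ × ℤ := fun j => (⌊2 * (center j).1 / δ⌋, ⌊2 * (center j).2 / δ⌋) with hf
  set A1 : Finset ℤ := Finset.Icc ⌊2 * (center i).1 / δ - (4 - 4 * δ) / δ⌋
      ⌊2 * (center i).1 / δ + (4 - 4 * δ) / δ⌋ with hA1
  set A2 : Finset ℤ := Finset.Icc ⌊2 * (center i).2 / δ - (4 - 4 * δ) / δ⌋
      ⌊2 * (center i).2 / δ + (4 - 4 * δ) / δ⌋ with hA2
  have hmaps : ∀ j ∈ S, f j ∈ A1 ×ˢ A2 := by
    intro j hj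
    have hd := hnear j hj
    rw [Prod.dist_eq] at hd
    have hx : |(center j).1 - (center i).1| < 2 * (1 - δ) := by
      have := lt_of_le_of_lt (le_max_left (dist (center j).1 (center i).1)
        (dist (center j).2 (center i).2)) hd
      rwa [Real.dist_eq] at this
    have hy : |(center j).2 - (center i).2| < 2 * (1 - δ) := by
      have := lt_of_le_of_lt (le_max_right (dist (center j).1 (center i).1)
        (dist (center j).2 (center i).2)) hd
      rwa [Real.dist_eq] at this
    rw [Finset.mem_product]
    exact ⟨floor_mem_Icc hδ0 hx, floor_mem_Icc hδ0 hy⟩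
  -- injectivity
  have key : ∀ u v : ℝ, |2 * u / δ - 2 * v / δ| < 1 → |u - v| < δ / 2 := by
    intro u v h
    have e : u - v = δ / 2 * (2 * u / δ - 2 * v / δ) := by field_simp
    rw [e, abs_mul, abs_of_pos (show (0:ℝ) < δ / 2 by positivity)]
    calc δ / 2 * |2 * u / δ - 2 * v / δ| < δ / 2 * 1 := by
          exact mul_lt_mul_of_pos_left h (by positivity)
      _ = δ / 2 := mul_one _
  have hinj : Set.InjOn f S := by
    intro j hj l hl hfe
    by_contra hne
    have hjQ : j ∈ Q := (Finset.mem_filter.mp (hS ▸ hj)).1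
    have hlQ : l ∈ Q := (Finset.mem_filter.mp (hS ▸ hl)).1
    have hsep := hdist j hjQ l hlQ hne
    have hx := key _ _ (Int.abs_sub_lt_one_of_floor_eq_floor (congrArg Prod.fst hfe))
    have hy := key _ _ (Int.abs_sub_lt_one_of_floor_eq_floor (congrArg Prod.snd hfe))
    have : dist (center j) (center l) < δ / 2 := by
      rw [Prod.dist_eq, Real.dist_eq, Real.dist_eq]
      exact max_lt hx hy
    linarith
  -- counting
  have hcard : S.card ≤ A1.card * A2.card := by
    have := Finset.card_le_card_of_injOn f hmaps hinj
    rwa [Finset.card_product] at this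
  have hR0 : (0:ℝ) ≤ (4 - 4 * δ) / δ := div_nonneg (by linarith) hδ0.le
  have hb1 : (A1.card : ℝ) ≤ 2 * ((4 - 4 * δ) / δ) + 2 := by
    have := floor_card_bound (a := 2 * (center i).1 / δ - (4 - 4 * δ) / δ)
      (b := 2 * (center i).1 / δ + (4 - 4 * δ) / δ) (by linarith)
    rw [hA1]; linarith
  have hb2 : (A2.card : ℝ) ≤ 2 * ((4 - 4 * δ) / δ) + 2 := by
    have := floor_card_bound (a := 2 * (center i).2 / δ - (4 - 4 * δ) / δ)
      (b := 2 * (center i).2 / δ + (4 - 4 * δ) / δ) (by linarith)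
    rw [hA2]; linarith
  have hfinal : (S.card : ℝ) ≤ (2 * ((4 - 4 * δ) / δ) + 2) ^ 2 := by
    have h0 : (0:ℝ) ≤ (A1.card : ℝ) := by positivity
    have h0' : (0:ℝ) ≤ (A2.card : ℝ) := by positivity
    calc (S.card : ℝ) ≤ (A1.card : ℝ) * (A2.card : ℝ) := by exact_mod_cast hcard
      _ ≤ (2 * ((4 - 4 * δ) / δ) + 2) ^ 2 := by nlinarith
  refine hfinal.trans ?_
  have e : 2 * ((4 - 4 * δ) / δ) + 2 = (8 - 6 * δ) / δ := by field_simp; ring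
  rw [e, div_pow, div_le_div_iff₀ (by positivity) (by positivity)]
  have h4 : δ ^ 2 * δ ^ 2 ≤ δ * δ ^ 2 := by nlinarith [sq_nonneg δ, mul_pos hδ0 hδ0]
  nlinarith [mul_pos (mul_pos hδ0 hδ0) hδ0, h4]
end

section
/- Let λ > 0 and M > 0, and let R be a finite family of open axis-parallel squares, each of side length at most M, that is λ-distant. Then for every point p of the plane, the number of squares of R containing p is at most ((M+λ)/λ)². -/
open scoped Classical

lemma abs_sub_lt_of_floor_div_eq {a b l : ℝ} (hl : 0 < l)
    (h : ⌊a / l⌋ = ⌊b / l⌋) : |a - b| < l := by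
  have hh : ((⌊a / l⌋ : ℤ) : ℝ) = ((⌊b / l⌋ : ℤ) : ℝ) := by exact_mod_cast h
  have h1 : |a / l - b / l| < 1 := by
    rw [abs_sub_lt_iff]
    constructor <;>
      linarith [Int.floor_le (a / l), Int.lt_floor_add_one (a / l),
        Int.floor_le (b / l), Int.lt_floor_add_one (b / l)]
  have : a / l - b / l = (a - b) / l := by ring
  rw [this, abs_div, abs_of_pos hl, div_lt_one hl] at h1
  exact h1

/-- A `lam`-distant finite family of open axis-parallel squares of side
length at most `M` has ply at most `((M + lam)/lam)²`: every point of the plane is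
contained in at most `((M + lam)/lam)²` of the squares. -/
theorem ply_of_distant_bounded_squares
    {ι : Type*} (lam M : ℝ) (hlam : 0 < lam) (hM : 0 < M)
    (R : Finset ι) (center : ι → ℝ × ℝ) (side : ι → ℝ)
    (hside : ∀ i ∈ R, side i ≤ M)
    (hdist : ∀ i ∈ R, ∀ j ∈ R, i ≠ j → lam ≤ dist (center i) (center j)) :
    ∀ p : ℝ × ℝ,
      ((R.filter (fun i => p ∈ sqSet (center i) (side i))).card : ℝ)
        ≤ ((M + lam) / lam) ^ 2 := by
  intro p
  set T := R.filter (fun i => p ∈ sqSet (center i) (side i)) with hT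
  have key : ∀ i ∈ T, dist p (center i) < M / 2 := by
    intro i hi
    rw [hT, Finset.mem_filter] at hi
    have h1 : dist p (center i) < side i / 2 := hi.2
    have h2 := hside i hi.1
    linarith
  set f : ι → ℤ × ℤ := fun i =>
    (⌊((center i).1 - p.1 + M / 2) / lam⌋, ⌊((center i).2 - p.2 + M / 2) / lam⌋)
    with hf
  have hinj : Set.InjOn f T := by
    intro i hi j hj hij
    by_contra hne
    have hiR : i ∈ R := (Finset.mem_filter.mp hi).1
    have hjR : j ∈ R := (Finset.mem_filter.mp hj).1
    have hd := hdist i hiR j hjR hne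
    have e1 : ⌊((center i).1 - p.1 + M / 2) / lam⌋
        = ⌊((center j).1 - p.1 + M / 2) / lam⌋ := congrArg Prod.fst hij
    have e2 : ⌊((center i).2 - p.2 + M / 2) / lam⌋
        = ⌊((center j).2 - p.2 + M / 2) / lam⌋ := congrArg Prod.snd hij
    have d1 := abs_sub_lt_of_floor_div_eq hlam e1
    have d2 := abs_sub_lt_of_floor_div_eq hlam e2
    have hx : |(center i).1 - (center j).1| < lam := by
      have : ((center i).1 - p.1 + M / 2) - ((center j).1 - p.1 + M / 2)
          = (center i).1 - (center j).1 := by ring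
      rwa [this] at d1
    have hy : |(center i).2 - (center j).2| < lam := by
      have : ((center i).2 - p.2 + M / 2) - ((center j).2 - p.2 + M / 2)
          = (center i).2 - (center j).2 := by ring
      rwa [this] at d2
    have : dist (center i) (center j) < lam := by
      rw [Prod.dist_eq]
      simp only [Real.dist_eq]
      exact max_lt hx hy
    linarith
  set b : ℤ := ⌊M / lam⌋ with hb
  have himg : T.image f ⊆ Finset.Icc (0, 0) (b, b) := by
    intro q hq
    rw [Finset.mem_image] at hq
    obtain ⟨i, hi, rfl⟩ := hq
    have hd := key i hi
    rw [Prod.dist_eq, max_lt_iff, Real.dist_eq, Real.dist_eq] at hd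
    have hx := abs_sub_lt_iff.mp hd.1
    have hy := abs_sub_lt_iff.mp hd.2
    rw [Finset.mem_Icc]
    constructor <;> rw [Prod.le_def] <;> constructor
    · exact Int.floor_nonneg.mpr (div_nonneg (by linarith [hx.1, hx.2]) hlam.le)
    · exact Int.floor_nonneg.mpr (div_nonneg (by linarith [hy.1, hy.2]) hlam.le)
    · exact Int.floor_le_floor (by gcongr <;> linarith [hx.2])
    · exact Int.floor_le_floor (by gcongr <;> linarith [hy.2])
  have hb0 : (0:ℤ) ≤ b := Int.floor_nonneg.mpr (div_nonneg hM.le hlam.le)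
  have hc1 : T.card = (T.image f).card := (Finset.card_image_of_injOn hinj).symm
  have hc2 : (T.image f).card ≤ (Finset.Icc ((0:ℤ), (0:ℤ)) (b, b)).card :=
    Finset.card_le_card himg
  have hc3 : (Finset.Icc ((0:ℤ), (0:ℤ)) (b, b)).card = (b + 1).toNat * (b + 1).toNat := by
    rw [Finset.card_Icc_prod]
    simp [Int.card_Icc]
  have hcard : T.card ≤ (b + 1).toNat * (b + 1).toNat := by
    rw [hc1]; exact hc2.trans_eq hc3
  have hcast : (((b + 1).toNat : ℝ)) = (b : ℝ) + 1 := by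
    have := Int.toNat_of_nonneg (show (0:ℤ) ≤ b + 1 by linarith)
    exact_mod_cast congrArg (Int.cast : ℤ → ℝ) this
  have hr : (T.card : ℝ) ≤ ((b : ℝ) + 1) * ((b : ℝ) + 1) := by
    calc (T.card : ℝ) ≤ (((b + 1).toNat * (b + 1).toNat : ℕ) : ℝ) := by exact_mod_cast hcard
      _ = ((b : ℝ) + 1) * ((b : ℝ) + 1) := by push_cast [hcast]; ring
  have hbr : (b : ℝ) + 1 ≤ (M + lam) / lam := by
    have h2 : (M + lam) / lam = M / lam + 1 := by field_simp
    have h3 := Int.floor_le (M / lam)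
    rw [h2]; linarith
  have hbpos : (0:ℝ) ≤ (b : ℝ) + 1 := by exact_mod_cast (by linarith : (0:ℤ) ≤ b + 1)
  nlinarith [hr, hbr, hbpos]
end
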